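/- Let z₋, z₊ ∈ ℝ with 0 < z₋ < 1 and z₋ < z₊. Then ∫₀^{z₋} dz / ((1−z)·√z·√((z₊−z)(z₋−z))) = π · z₊^{−1/2} · F₁(1/2, 1/2, 1; 1; z₋/z₊, z₋). -/

import Mathlib

/-- The Pochhammer symbol `(q)_k = q(q+1)⋯(q+k−1)`. -/
noncomputable def poch (q : ℝ) (k : ℕ) : ℝ := ∏ i ∈ Finset.range k, (q + (i : ℝ))

/-- Appell's first hypergeometric series
`F₁(α,β,β′;γ;x,y) = Σ_{m,n} (α)_{m+n}(β)_m(β′)_n/((γ)_{m+n} m! n!) x^m y^n`. -/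
noncomputable def appellF1 (α β β' γ x y : ℝ) : ℝ :=
  ∑' p : ℕ × ℕ,
    poch α (p.1 + p.2) * poch β p.1 * poch β' p.2 /
        (poch γ (p.1 + p.2) * (p.1.factorial : ℝ) * (p.2.factorial : ℝ)) *
      x ^ p.1 * y ^ p.2

namespace Stmt8


noncomputable def c (k : ℕ) : ℝ := poch (1/2) k / (k.factorial : ℝ)

lemma poch_zero (q : ℝ) : poch q 0 = 1 := by simp [poch]

lemma poch_succ (q : ℝ) (k : ℕ) : poch q (k+1) = poch q k * (q + k) := by
  simp [poch, Finset.prod_range_succ]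

lemma poch_one (k : ℕ) : poch 1 k = k.factorial := by
  induction k with
  | zero => simp [poch]
  | succ n ih => rw [poch_succ, ih]; push_cast [Nat.factorial_succ]; ring

lemma poch_half_pos (k : ℕ) : 0 < poch (1/2) k := by
  apply Finset.prod_pos; intro i _; positivity

lemma c_pos (k : ℕ) : 0 < c k := by
  have := poch_half_pos k
  have : (0:ℝ) < k.factorial := by positivity
  unfold c; positivity

lemma c_zero : c 0 = 1 := by simp [c, poch]

lemma c_succ (k : ℕ) : c (k+1) = c k * ((1/2 + k)/(k+1)) := by
  have hk : (k.factorial : ℝ) ≠ 0 := by positivity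
  have hk1 : ((k:ℝ)+1) ≠ 0 := by positivity
  unfold c
  rw [poch_succ]
  push_cast [Nat.factorial_succ]
  rw [div_mul_div_comm]
  congr 1
  ring

lemma c_le_one (k : ℕ) : c k ≤ 1 := by
  induction k with
  | zero => simp [c_zero]
  | succ n ih =>
    rw [c_succ]
    have h1 : (1/2 + (n:ℝ))/((n:ℝ)+1) ≤ 1 := by
      rw [div_le_one (by positivity)]; linarith
    calc c n * ((1/2 + (n:ℝ))/((n:ℝ)+1)) ≤ c n * 1 := by
          apply mul_le_mul_of_nonneg_left h1 (c_pos n).le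
      _ ≤ 1 := by simpa using ih

open Set in
lemma summable_c {u : ℝ} (hu : |u| < 1) : Summable (fun m => c m * u ^ m) := by
  apply Summable.of_norm_bounded (g := fun m => |u| ^ m)
    (summable_geometric_of_lt_one (abs_nonneg u) hu)
  intro m
  rw [norm_mul, norm_pow, Real.norm_eq_abs, Real.norm_eq_abs,
    abs_of_pos (c_pos m)]
  calc c m * |u| ^ m ≤ 1 * |u| ^ m := by
        apply mul_le_mul_of_nonneg_right (c_le_one m) (by positivity)
    _ = |u| ^ m := one_mul _

set_option maxHeartbeats 1000000 in
open Set in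
lemma tsum_c {u : ℝ} (h0 : 0 ≤ u) (h1 : u < 1) :
    ∑' m, c m * u ^ m = 1 / Real.sqrt (1 - u) := by
  set r : ℝ := (1 + u)/2 with hr
  have hr0 : 0 < r := by positivity
  have hr1 : r < 1 := by rw [hr]; linarith
  have hur : u < r := by rw [hr]; linarith
  -- summable bound for derivatives
  set bnd : ℕ → ℝ := fun n => (n : ℝ) * r ^ (n - 1) with hbnd_def
  have hrn : ‖r‖ < 1 := by rw [Real.norm_eq_abs, abs_of_pos hr0]; exact hr1
  have hbnd : Summable bnd := by
    have h : Summable (fun n : ℕ => ((n:ℝ) * r ^ n) / r) :=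
      ((summable_pow_mul_geometric_of_norm_lt_one 1 hrn).congr
          (fun n => by rw [pow_one])).div_const r
    apply h.congr
    intro n
    cases n with
    | zero => simp [hbnd_def]
    | succ m =>
      rw [hbnd_def]
      simp only [Nat.add_sub_cancel]
      rw [pow_succ]
      field_simp
  set g' : ℕ → ℝ → ℝ := fun n y => c n * ((n:ℝ) * y ^ (n - 1)) with hg'_def
  have hg : ∀ (n : ℕ) (y : ℝ), HasDerivAt (fun z => c n * z ^ n) (g' n y) y :=
    fun n y => (hasDerivAt_pow n y).const_mul (c n)
  have hg'le : ∀ (n : ℕ) (y : ℝ), y ∈ Ioo (-r) r → ‖g' n y‖ ≤ bnd n := by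
    intro n y hy
    rw [hg'_def]
    simp only [norm_mul, Real.norm_eq_abs, abs_of_pos (c_pos n), norm_pow]
    have hyr : |y| ≤ r := by
      rw [abs_le]; exact ⟨hy.1.le, hy.2.le⟩
    calc c n * (|(n:ℝ)| * |y| ^ (n-1)) ≤ 1 * (|(n:ℝ)| * r ^ (n-1)) := by
          apply mul_le_mul (c_le_one n) _ (by positivity) zero_le_one
          exact mul_le_mul_of_nonneg_left (pow_le_pow_left₀ (abs_nonneg y) hyr _) (abs_nonneg _)
      _ = bnd n := by rw [one_mul, hbnd_def, Nat.abs_cast]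
  have hg0 : Summable fun n => c n * (0:ℝ) ^ n := summable_c (by simp)
  have h0mem : (0:ℝ) ∈ Ioo (-r) r := ⟨by linarith, hr0⟩
  have hasD : ∀ y ∈ Ioo (-r) r,
      HasDerivAt (fun z => ∑' n, c n * z ^ n) (∑' n, g' n y) y := by
    intro y hy
    exact hasDerivAt_tsum_of_isPreconnected hbnd isOpen_Ioo
      (convex_Ioo _ _).isPreconnected (fun n y _ => hg n y) hg'le h0mem hg0 hy
  set G : ℝ → ℝ := fun z => ∑' n, c n * z ^ n with hG_def
  -- the ODE
  have hODE : ∀ y ∈ Ioo (-r) r, (1 - y) * (∑' n, g' n y) = (1/2) * G y := by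
    intro y hy
    have hyabs : |y| < 1 := by
      rw [abs_lt]; constructor <;> [linarith [hy.1]; linarith [hy.2]]
    have S1 : Summable fun n => g' n y :=
      Summable.of_norm_bounded hbnd (fun n => hg'le n y hy)
    have hyn : ‖y‖ < 1 := by rwa [Real.norm_eq_abs]
    have hyn' : ‖|y|‖ < 1 := by rwa [Real.norm_eq_abs, abs_abs]
    have Sny' : Summable (fun n : ℕ => (n:ℝ) * |y| ^ n) :=
      (summable_pow_mul_geometric_of_norm_lt_one 1 hyn').congr (fun n => by rw [pow_one])
    have Sa : Summable fun n : ℕ => c n * (1/2 + (n:ℝ)) * y ^ n := by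
      apply Summable.of_norm_bounded (g := fun n : ℕ => (1 + (n:ℝ)) * |y| ^ n)
      · exact ((summable_geometric_of_lt_one (abs_nonneg y) hyabs).add Sny').congr
          (fun n => by push_cast; ring)
      · intro n
        rw [norm_mul, norm_mul, norm_pow, Real.norm_eq_abs, Real.norm_eq_abs,
          Real.norm_eq_abs, abs_of_pos (c_pos n)]
        have h2 : |1/2 + (n:ℝ)| ≤ 1 + n := by
          rw [abs_of_pos (by positivity)]; push_cast; linarith
        calc c n * |1/2 + (n:ℝ)| * |y|^n ≤ 1 * (1 + (n:ℝ)) * |y|^n := by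
              apply mul_le_mul_of_nonneg_right _ (by positivity)
              exact mul_le_mul (c_le_one n) h2 (abs_nonneg _) zero_le_one
          _ = (1 + (n:ℝ)) * |y|^n := by rw [one_mul]
    have Sb : Summable fun n : ℕ => c n * (n:ℝ) * y ^ n := by
      apply Summable.of_norm_bounded (g := fun n : ℕ => (n:ℝ) * |y| ^ n)
      · exact Sny'
      · intro n
        rw [norm_mul, norm_mul, norm_pow, Real.norm_eq_abs, Real.norm_eq_abs,
          Real.norm_eq_abs, abs_of_pos (c_pos n), Nat.abs_cast]
        apply mul_le_mul_of_nonneg_right _ (by positivity)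
        calc c n * (n:ℝ) ≤ 1 * (n:ℝ) :=
              mul_le_mul_of_nonneg_right (c_le_one n) (Nat.cast_nonneg n)
          _ = (n:ℝ) := one_mul _
    -- D = ∑ c n (1/2+n) y^n
    have hD : (∑' n, g' n y) = ∑' n : ℕ, c n * (1/2 + (n:ℝ)) * y ^ n := by
      rw [Summable.tsum_eq_zero_add S1]
      have e0 : g' 0 y = 0 := by simp [hg'_def]
      rw [e0, zero_add]
      apply tsum_congr
      intro n
      show c (n+1) * (((n:ℕ)+1 : ℕ) * y ^ ((n+1) - 1)) = _
      rw [c_succ n]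
      simp only [Nat.add_sub_cancel]
      have hne : ((n:ℝ)+1) ≠ 0 := by positivity
      push_cast
      field_simp
    -- y * D = ∑ c n n y^n
    have hyD : y * (∑' n, g' n y) = ∑' n : ℕ, c n * (n:ℝ) * y ^ n := by
      rw [← tsum_mul_left]
      apply tsum_congr
      intro n
      cases n with
      | zero => show y * (c 0 * (((0:ℕ):ℝ) * y ^ (0 - 1))) = c 0 * ((0:ℕ):ℝ) * y ^ 0; simp
      | succ m =>
        show y * (c (m+1) * (((m+1:ℕ):ℝ) * y ^ ((m+1) - 1))) = _
        simp only [Nat.add_sub_cancel]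
        rw [pow_succ]
        push_cast
        ring
    have key : (1 - y) * (∑' n, g' n y)
        = (∑' n : ℕ, c n * (1/2 + (n:ℝ)) * y ^ n) - ∑' n : ℕ, c n * (n:ℝ) * y ^ n := by
      rw [sub_mul, one_mul, hyD, hD]
    rw [key, ← Summable.tsum_sub Sa Sb]
    rw [hG_def]
    simp only
    rw [← tsum_mul_left]
    apply tsum_congr
    intro n
    ring
  -- φ = sqrt(1-v) * G v has zero derivative on [0,u]
  have hφ : ∀ v ∈ Icc 0 u, HasDerivAt (fun w => Real.sqrt (1 - w) * G w) 0 v := by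
    intro v hv
    have hv1 : v < 1 := lt_of_le_of_lt hv.2 h1
    have hvmem : v ∈ Ioo (-r) r := ⟨by linarith [hv.1], by linarith [hv.2]⟩
    have h1v : (0:ℝ) < 1 - v := by linarith
    have hs : Real.sqrt (1 - v) ≠ 0 := by positivity
    have hsq : HasDerivAt (fun w : ℝ => Real.sqrt (1 - w))
        (1 / (2 * Real.sqrt (1 - v)) * (-1)) v := by
      have hinner : HasDerivAt (fun w : ℝ => 1 - w) (-1) v := (hasDerivAt_id v).const_sub 1
      exact (Real.hasDerivAt_sqrt h1v.ne').comp v hinner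
    have hprod := hsq.mul (hasD v hvmem)
    have hODEv := hODE v hvmem
    have hss : Real.sqrt (1-v) * Real.sqrt (1-v) = 1 - v := Real.mul_self_sqrt h1v.le
    apply hprod.congr_deriv
    have hD2 : Real.sqrt (1-v) * (∑' n, g' n v) = G v / (2 * Real.sqrt (1-v)) := by
      rw [eq_div_iff (by positivity : (2:ℝ) * Real.sqrt (1-v) ≠ 0)]
      linear_combination (2 * (∑' n, g' n v)) * hss + 2 * hODEv
    rw [hD2]
    ring
  -- conclude
  have hconst : Real.sqrt (1 - u) * G u = Real.sqrt (1 - 0) * G 0 := by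
    have := constant_of_has_deriv_right_zero
      (f := fun w => Real.sqrt (1 - w) * G w) (a := 0) (b := u)
      (fun v hv => (hφ v hv).continuousAt.continuousWithinAt)
      (fun v hv => (hφ v ⟨hv.1, hv.2.le⟩).hasDerivWithinAt)
    exact this u (right_mem_Icc.mpr h0)
  have hG0 : G 0 = 1 := by
    simp only [hG_def]
    rw [tsum_eq_single 0 (by intro n hn; simp [zero_pow hn])]
    simp [c_zero]
  rw [hG0, sub_zero, Real.sqrt_one, mul_one] at hconst
  have hs : Real.sqrt (1 - u) ≠ 0 := by
    have : (0:ℝ) < 1 - u := by linarith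
    positivity
  show G u = 1 / Real.sqrt (1 - u)
  field_simp
  linear_combination hconst


lemma Gamma_half_add (k : ℕ) :
    Real.Gamma ((k:ℝ) + 1/2) = poch (1/2) k * Real.sqrt Real.pi := by
  induction k with
  | zero =>
    rw [poch_zero, one_mul]
    norm_num
    exact Real.Gamma_one_half_eq
  | succ n ih =>
    have h : ((n+1:ℕ):ℝ) + 1/2 = ((n:ℝ) + 1/2) + 1 := by push_cast; ring
    rw [h, Real.Gamma_add_one (by positivity), ih, poch_succ]
    ring

lemma betaReal {a b : ℝ} (ha : 0 < a) (hb : 0 < b) :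
    ∫ t in (0:ℝ)..1, t ^ (a-1) * (1-t) ^ (b-1)
      = Real.Gamma a * Real.Gamma b / Real.Gamma (a+b) := by
  have h := Complex.Gamma_mul_Gamma_eq_betaIntegral
    (s := (a:ℂ)) (t := (b:ℂ)) (by simpa using ha) (by simpa using hb)
  have hint : Complex.betaIntegral a b
      = ((∫ t in (0:ℝ)..1, t ^ (a-1) * (1-t) ^ (b-1) : ℝ) : ℂ) := by
    rw [Complex.betaIntegral, ← intervalIntegral.integral_ofReal]
    apply intervalIntegral.integral_congr
    intro x hx
    rw [Set.uIcc_of_le (by norm_num : (0:ℝ) ≤ 1)] at hx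
    have hx0 : (0:ℝ) ≤ x := hx.1
    have hx1 : (0:ℝ) ≤ 1 - x := by linarith [hx.2]
    show (x:ℂ) ^ ((a:ℂ)-1) * (1-(x:ℂ)) ^ ((b:ℂ)-1) = _
    rw [(by push_cast; ring : ((a:ℂ)-1) = ((a-1 : ℝ) : ℂ)),
        (by push_cast; ring : ((b:ℂ)-1) = ((b-1 : ℝ) : ℂ)),
        (by push_cast; ring : (1-(x:ℂ)) = ((1-x : ℝ) : ℂ)),
        ← Complex.ofReal_cpow hx0, ← Complex.ofReal_cpow hx1]
    push_cast
    ring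
  have hGab : Complex.Gamma ((a:ℂ)+(b:ℂ)) = ((Real.Gamma (a+b) : ℝ) : ℂ) := by
    rw [← Complex.ofReal_add, Complex.Gamma_ofReal]
  rw [hint, hGab, Complex.Gamma_ofReal, Complex.Gamma_ofReal] at h
  have h2 : Real.Gamma a * Real.Gamma b
      = Real.Gamma (a+b) * ∫ t in (0:ℝ)..1, t ^ (a-1) * (1-t) ^ (b-1) := by
    exact_mod_cast h
  have hne : Real.Gamma (a+b) ≠ 0 := (Real.Gamma_pos_of_pos (by linarith)).ne'
  rw [eq_div_iff hne]
  linarith [h2]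

lemma betaIntegrable {a b : ℝ} (ha : 0 < a) (hb : 0 < b) :
    IntervalIntegrable (fun t => t ^ (a-1) * (1-t) ^ (b-1)) MeasureTheory.volume 0 1 := by
  have h := Complex.betaIntegral_convergent (u := (a:ℂ)) (v := (b:ℂ)) (by simpa) (by simpa)
  rw [intervalIntegrable_iff] at h ⊢
  refine MeasureTheory.Integrable.congr h.re ?_
  filter_upwards [MeasureTheory.ae_restrict_mem measurableSet_uIoc] with x hx
  rw [Set.uIoc_of_le (by norm_num : (0:ℝ) ≤ 1)] at hx
  have hx0 : (0:ℝ) ≤ x := le_of_lt hx.1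
  have hx1 : (0:ℝ) ≤ 1 - x := by linarith [hx.2]
  have e : ((x:ℂ) ^ ((a:ℂ)-1) * (1-(x:ℂ)) ^ ((b:ℂ)-1))
      = ((x ^ (a-1) * (1-x) ^ (b-1) : ℝ) : ℂ) := by
    rw [(by push_cast; ring : ((a:ℂ)-1) = ((a-1 : ℝ) : ℂ)),
        (by push_cast; ring : ((b:ℂ)-1) = ((b-1 : ℝ) : ℂ)),
        (by push_cast; ring : (1-(x:ℂ)) = ((1-x : ℝ) : ℂ)),
        ← Complex.ofReal_cpow hx0, ← Complex.ofReal_cpow hx1]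
    push_cast
    ring
  show ((x:ℂ) ^ ((a:ℂ)-1) * (1-(x:ℂ)) ^ ((b:ℂ)-1)).re = _
  rw [e, Complex.ofReal_re]

lemma betaVal (k : ℕ) :
    ∫ t in (0:ℝ)..1, t ^ ((k:ℝ) - 1/2) * (1-t) ^ (-(1/2) : ℝ) = Real.pi * c k := by
  have h := betaReal (a := (k:ℝ) + 1/2) (b := 1/2) (by positivity) (by norm_num)
  rw [(by ring : (k:ℝ) + 1/2 - 1 = (k:ℝ) - 1/2),
      (by norm_num : (1:ℝ)/2 - 1 = -(1/2:ℝ))] at h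
  rw [h, Gamma_half_add, Real.Gamma_one_half_eq,
    (by push_cast; ring : (k:ℝ) + 1/2 + 1/2 = (k:ℝ) + 1), Real.Gamma_nat_eq_factorial,
    mul_assoc, Real.mul_self_sqrt Real.pi_pos.le]
  unfold c
  ring

open Set MeasureTheory in
lemma interchange (x y : ℝ) (hx0 : 0 < x) (hx1 : x < 1) (hy0 : 0 < y) (hy1 : y < 1) :
    ∫ t in Ioo (0:ℝ) 1, (Real.sqrt t)⁻¹ * (Real.sqrt (1-t))⁻¹ /
        (Real.sqrt (1 - x*t) * (1 - y*t))
      = Real.pi * ∑' p : ℕ × ℕ, c (p.1 + p.2) * c p.1 * x ^ p.1 * y ^ p.2 := by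
  set F : ℕ × ℕ → ℝ → ℝ := fun p t =>
    c p.1 * x ^ p.1 * y ^ p.2 * (t ^ (((p.1 + p.2 : ℕ):ℝ) - 1/2) * (1-t) ^ (-(1/2) : ℝ))
    with hF_def
  -- each F p is integrable on Ioo 0 1
  have hInt : ∀ p : ℕ × ℕ, IntegrableOn (F p) (Ioo (0:ℝ) 1) := by
    intro p
    have h := (betaIntegrable (a := ((p.1 + p.2 : ℕ):ℝ) + 1/2) (b := 1/2)
      (by positivity) (by norm_num)).const_mul (c p.1 * x ^ p.1 * y ^ p.2)
    rw [intervalIntegrable_iff, Set.uIoc_of_le (by norm_num : (0:ℝ) ≤ 1)] at h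
    have e1 : ((p.1 + p.2 : ℕ):ℝ) + 1/2 - 1 = ((p.1 + p.2 : ℕ):ℝ) - 1/2 := by ring
    have e2 : (1:ℝ)/2 - 1 = -(1/2) := by norm_num
    rw [e1, e2] at h
    exact (h.mono_set Ioo_subset_Ioc_self)
  -- value of each integral
  have hVal : ∀ p : ℕ × ℕ, ∫ t in Ioo (0:ℝ) 1, F p t
      = c p.1 * x ^ p.1 * y ^ p.2 * (Real.pi * c (p.1 + p.2)) := by
    intro p
    rw [← MeasureTheory.integral_Ioc_eq_integral_Ioo,
      ← intervalIntegral.integral_of_le (by norm_num : (0:ℝ) ≤ 1)]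
    rw [hF_def]
    simp only
    rw [intervalIntegral.integral_const_mul, betaVal]
  -- nonnegativity on Ioo
  have hNonneg : ∀ p : ℕ × ℕ, ∀ t ∈ Ioo (0:ℝ) 1, 0 ≤ F p t := by
    intro p t ht
    rw [hF_def]
    have h1 : (0:ℝ) ≤ t ^ (((p.1 + p.2 : ℕ):ℝ) - 1/2) := Real.rpow_nonneg ht.1.le _
    have h2 : (0:ℝ) ≤ (1-t) ^ (-(1/2):ℝ) := Real.rpow_nonneg (by linarith [ht.2]) _
    have := (c_pos p.1).le
    positivity
  -- summability of integrals of norms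
  have hxy : Summable (fun p : ℕ × ℕ => x ^ p.1 * y ^ p.2) := by
    apply summable_mul_of_summable_norm (f := fun m : ℕ => x ^ m) (g := fun n : ℕ => y ^ n)
    · simpa [abs_of_pos, hx0, abs_of_pos (pow_pos hx0 _)] using
        summable_geometric_of_lt_one hx0.le hx1
    · simpa [abs_of_pos (pow_pos hy0 _)] using
        summable_geometric_of_lt_one hy0.le hy1
  have hSum : Summable (fun p : ℕ × ℕ => ∫ t in Ioo (0:ℝ) 1, ‖F p t‖) := by
    have he : ∀ p : ℕ × ℕ, ∫ t in Ioo (0:ℝ) 1, ‖F p t‖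
        = c p.1 * x ^ p.1 * y ^ p.2 * (Real.pi * c (p.1 + p.2)) := by
      intro p
      rw [← hVal p]
      apply MeasureTheory.setIntegral_congr_fun measurableSet_Ioo
      intro t ht
      exact Real.norm_of_nonneg (hNonneg p t ht)
    rw [funext he]
    apply Summable.of_nonneg_of_le
      (fun p => by have := (c_pos p.1).le; have := (c_pos (p.1+p.2)).le; positivity)
      (fun p => ?_) (hxy.mul_left Real.pi)
    · have h1 : c p.1 * x ^ p.1 * y ^ p.2 * (Real.pi * c (p.1 + p.2))
          ≤ 1 * x ^ p.1 * y ^ p.2 * (Real.pi * 1) := by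
        apply mul_le_mul
        · apply mul_le_mul_of_nonneg_right
            (mul_le_mul_of_nonneg_right (c_le_one p.1) (by positivity)) (by positivity)
        · exact mul_le_mul_of_nonneg_left (c_le_one _) Real.pi_pos.le
        · have := (c_pos (p.1+p.2)).le; positivity
        · positivity
      calc c p.1 * x ^ p.1 * y ^ p.2 * (Real.pi * c (p.1 + p.2))
          ≤ 1 * x ^ p.1 * y ^ p.2 * (Real.pi * 1) := h1
        _ = Real.pi * (x ^ p.1 * y ^ p.2) := by ring
  -- pointwise sum on Ioo
  have hPt : ∀ t ∈ Ioo (0:ℝ) 1, (∑' p : ℕ × ℕ, F p t)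
      = (Real.sqrt t)⁻¹ * (Real.sqrt (1-t))⁻¹ / (Real.sqrt (1 - x*t) * (1 - y*t)) := by
    intro t ht
    have ht0 : 0 < t := ht.1
    have ht1 : t < 1 := ht.2
    have hxt : 0 < x * t := by positivity
    have hxt1 : x * t < 1 := by nlinarith
    have hyt : 0 < y * t := by positivity
    have hyt1 : y * t < 1 := by nlinarith
    have hK : ∀ p : ℕ × ℕ, F p t
        = (c p.1 * (x*t) ^ p.1) * ((y*t) ^ p.2)
          * ((Real.sqrt t)⁻¹ * (Real.sqrt (1-t))⁻¹) := by
      intro p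
      rw [hF_def]
      simp only
      rw [(by push_cast; ring : (((p.1 + p.2 : ℕ):ℝ) - 1/2)
            = ((p.1:ℝ) + (p.2:ℝ)) + (-(1/2))),
        Real.rpow_add ht0, Real.rpow_add ht0, Real.rpow_natCast, Real.rpow_natCast]
      rw [Real.rpow_neg ht0.le, Real.rpow_neg (by linarith : (0:ℝ) ≤ 1 - t),
        ← Real.sqrt_eq_rpow, ← Real.sqrt_eq_rpow]
      rw [mul_pow, mul_pow]
      ring
    rw [tsum_congr hK]
    have hsf : Summable (fun m : ℕ => ‖c m * (x*t) ^ m‖) := by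
      have := summable_c (u := x*t) (by rw [abs_of_pos hxt]; exact hxt1)
      exact this.abs
    have hsg : Summable (fun n : ℕ => ‖(y*t) ^ n‖) := by
      have := summable_geometric_of_lt_one hyt.le hyt1
      exact this.abs
    rw [tsum_mul_right, ← tsum_mul_tsum_of_summable_norm hsf hsg]
    rw [tsum_c hxt.le hxt1, tsum_geometric_of_lt_one hyt.le hyt1]
    rw [(by linarith : 1 - x*t = 1 - x*t)]
    field_simp
  -- put it together
  rw [← MeasureTheory.setIntegral_congr_fun measurableSet_Ioo hPt]
  rw [← MeasureTheory.integral_tsum_of_summable_integral_norm hInt hSum]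
  rw [tsum_congr hVal, ← tsum_mul_left]
  exact tsum_congr (fun p => by ring)


end Stmt8

open Set MeasureTheory Stmt8

/-- for `0 < z₋ < 1` and `z₋ < z₊`,
`∫₀^{z₋} dz/((1−z)√z √((z₊−z)(z₋−z))) = π·z₊^{−1/2}·F₁(1/2,1/2,1;1;z₋/z₊,z₋)`
(`zm` stands for `z₋`, `zp` for `z₊`). -/
theorem stmt_8 (zm zp : ℝ) (h0 : 0 < zm) (h1 : zm < 1) (h2 : zm < zp) :
    ∫ z in (0 : ℝ)..zm,
        1 / ((1 - z) * Real.sqrt z * Real.sqrt ((zp - z) * (zm - z)))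
      = Real.pi * zp ^ (-(1 : ℝ) / 2) *
          appellF1 (1 / 2) (1 / 2) 1 1 (zm / zp) zm := by
  have hzp : (0:ℝ) < zp := lt_trans h0 h2
  have hx0 : 0 < zm / zp := by positivity
  have hx1 : zm / zp < 1 := (div_lt_one hzp).mpr h2
  have hcv := intervalIntegral.smul_integral_comp_mul_left (a := 0) (b := 1)
    (fun z => 1 / ((1 - z) * Real.sqrt z * Real.sqrt ((zp - z) * (zm - z)))) zm
  rw [mul_zero, mul_one] at hcv
  rw [← hcv, smul_eq_mul, ← intervalIntegral.integral_const_mul,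
    intervalIntegral.integral_of_le (by norm_num : (0:ℝ) ≤ 1),
    MeasureTheory.integral_Ioc_eq_integral_Ioo]
  have hpt : ∀ t ∈ Ioo (0:ℝ) 1,
      zm * (1 / ((1 - zm*t) * Real.sqrt (zm*t) * Real.sqrt ((zp - zm*t) * (zm - zm*t))))
      = (Real.sqrt zp)⁻¹ * ((Real.sqrt t)⁻¹ * (Real.sqrt (1-t))⁻¹ /
          (Real.sqrt (1 - (zm/zp)*t) * (1 - zm*t))) := by
    intro t ht
    obtain ⟨ht0, ht1⟩ := ht
    have hzmt : zm * t < zm := by nlinarith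
    have h1zmt : 0 < 1 - zm*t := by linarith
    have hxt1 : 0 < 1 - (zm/zp)*t := by
      have : (zm/zp)*t < zm/zp := by nlinarith
      linarith
    have e2 : zp - zm*t = zp*(1 - (zm/zp)*t) := by field_simp
    have e1 : zm - zm*t = zm*(1-t) := by ring
    rw [e1, e2, Real.sqrt_mul h0.le t,
      Real.sqrt_mul (by positivity : (0:ℝ) ≤ zp*(1 - (zm/zp)*t)) ,
      Real.sqrt_mul hzp.le, Real.sqrt_mul h0.le]
    have hszm : Real.sqrt zm * Real.sqrt zm = zm := Real.mul_self_sqrt h0.le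
    set s1 := Real.sqrt zm with hs1
    set s2 := Real.sqrt t with hs2
    set s3 := Real.sqrt zp with hs3
    set s4 := Real.sqrt (1 - (zm/zp)*t) with hs4
    set s5 := Real.sqrt (1-t) with hs5
    have n1 : s1 ≠ 0 := by rw [hs1]; positivity
    have n2 : s2 ≠ 0 := by rw [hs2]; positivity
    have n3 : s3 ≠ 0 := by rw [hs3]; positivity
    have n4 : s4 ≠ 0 := by rw [hs4]; positivity
    have n5 : s5 ≠ 0 := by
      have : (0:ℝ) < 1 - t := by linarith
      rw [hs5]; positivity
    have hw : (1 - zm*t) ≠ 0 := h1zmt.ne'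
    field_simp
    linear_combination (-1) * hszm
  rw [MeasureTheory.setIntegral_congr_fun measurableSet_Ioo hpt,
    MeasureTheory.integral_const_mul _ _, interchange (zm/zp) zm hx0 hx1 h0 h1]
  have hs : zp ^ (-(1:ℝ)/2) = (Real.sqrt zp)⁻¹ := by
    rw [(by norm_num : -(1:ℝ)/2 = -(1/2 : ℝ)), Real.rpow_neg hzp.le, Real.sqrt_eq_rpow]
  have happ : appellF1 (1/2) (1/2) 1 1 (zm/zp) zm
      = ∑' p : ℕ × ℕ, c (p.1+p.2) * c p.1 * (zm/zp)^p.1 * zm^p.2 := by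
    unfold appellF1
    apply tsum_congr
    intro p
    rw [poch_one, poch_one]
    unfold c
    have f1 : (p.1.factorial : ℝ) ≠ 0 := by positivity
    have f2 : (p.2.factorial : ℝ) ≠ 0 := by positivity
    have f12 : (((p.1+p.2).factorial : ℕ) : ℝ) ≠ 0 := by positivity
    field_simp
  rw [hs, happ]
  ring
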